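/- In a flow network with integer edge capacities, a single source s and single sink t, there exists a maximum flow that is integer-valued on every edge. -/

import Mathlib

/-- A feasible flow in a finite flow network with integer capacities `b`,
source `s` and sink `t`: nonnegative, capacity-respecting, and conserving flow
at every vertex other than `s` and `t`. -/
def FeasibleFlow {V : Type} [Fintype V] (b : V → V → ℕ) (s t : V)
    (f : V → V → ℝ) : Prop :=
  (∀ u v, 0 ≤ f u v) ∧ (∀ u v, f u v ≤ (b u v : ℝ)) ∧
    ∀ v : V, v ≠ s → v ≠ t → ∑ u, f u v = ∑ w, f v w

/-- The value of a flow: total flow out of the source `s`. -/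
noncomputable def flowValue {V : Type} [Fintype V] (s : V) (f : V → V → ℝ) : ℝ :=
  ∑ v, f s v


namespace Stmt6Aux

open Finset

variable {V : Type} [Fintype V] [DecidableEq V] (b : V → V → ℕ) (s t : V)

def exc (g : V → V → ℕ) (v : V) : ℤ := (∑ u, (g u v : ℤ)) - ∑ w, (g v w : ℤ)

lemma exc_congr {g g' : V → V → ℕ} {v : V} (h1 : ∀ u, g' u v = g u v)
    (h2 : ∀ w, g' v w = g v w) : exc g' v = exc g v := by
  unfold exc
  simp only [h1, h2]

lemma exc_update (g g' : V → V → ℕ) (x y : V) (d : ℤ)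
    (hd : ∀ u v, (g' u v : ℤ) = (g u v : ℤ) + if u = x ∧ v = y then d else 0) (v : V) :
    exc g' v = exc g v + (if v = y then d else 0) - (if v = x then d else 0) := by
  unfold exc
  have h1 : (∑ u, (g' u v : ℤ)) = (∑ u, (g u v : ℤ)) + (if v = y then d else 0) := by
    rw [Finset.sum_congr rfl fun u _ => hd u v, Finset.sum_add_distrib]
    congr 1
    by_cases hv : v = y
    · simp [hv]
    · simp [hv]
  have h2 : (∑ w, (g' v w : ℤ)) = (∑ w, (g v w : ℤ)) + (if v = x then d else 0) := by
    rw [Finset.sum_congr rfl fun w _ => hd v w, Finset.sum_add_distrib]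
    congr 1
    by_cases hv : v = x
    · simp [hv]
    · simp [hv]
  rw [h1, h2]; ring

/-- One augmentation step along a residual edge. -/
lemma step (f g : V → V → ℕ) (x y : V) (hxy : x ≠ y)
    (hcap : ∀ u v, g u v ≤ b u v)
    (hres : f x y < b x y ∨ 0 < f y x)
    (h1 : g x y = f x y) (h2 : g y x = f y x) :
    ∃ g1 : V → V → ℕ,
      (∀ u v, g1 u v ≤ b u v) ∧
      (∀ u v, ¬(u = x ∧ v = y) → ¬(u = y ∧ v = x) → g1 u v = g u v) ∧
      exc g1 x = exc g x - 1 ∧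
      exc g1 y = exc g y + 1 ∧
      (∀ v, v ≠ x → v ≠ y → exc g1 v = exc g v) := by
  rcases hres with hf | hb
  · set g1 : V → V → ℕ := fun u v => if u = x ∧ v = y then g u v + 1 else g u v with hg1
    have hd : ∀ u v, (g1 u v : ℤ) = (g u v : ℤ) + if u = x ∧ v = y then 1 else 0 := by
      intro u v
      by_cases h : u = x ∧ v = y <;> simp [hg1, h]
    have key := exc_update g g1 x y 1 hd
    refine ⟨g1, ?_, ?_, ?_, ?_, ?_⟩
    · intro u v
      by_cases h : u = x ∧ v = y
      · obtain ⟨hu, hv⟩ := h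
        subst hu; subst hv
        simp only [hg1, if_pos (And.intro rfl rfl)]
        omega
      · simp [hg1, h, hcap u v]
    · intro u v h _
      simp [hg1, h]
    · rw [key x]; rw [if_neg hxy, if_pos rfl]; ring
    · rw [key y]; rw [if_pos rfl, if_neg (Ne.symm hxy)]; ring
    · intro v hvx hvy; rw [key v]; rw [if_neg hvy, if_neg hvx]; ring
  · set g1 : V → V → ℕ := fun u v => if u = y ∧ v = x then g u v - 1 else g u v with hg1
    have hyx : 1 ≤ g y x := by rw [h2]; exact hb
    have hd : ∀ u v, (g1 u v : ℤ) = (g u v : ℤ) + if u = y ∧ v = x then (-1 : ℤ) else 0 := by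
      intro u v
      by_cases h : u = y ∧ v = x
      · obtain ⟨hu, hv⟩ := h
        have hle : 1 ≤ g u v := by rw [hu, hv]; exact hyx
        simp only [hg1, if_pos (And.intro hu hv)]
        omega
      · simp [hg1, h]
    have key := exc_update g g1 y x (-1) hd
    refine ⟨g1, ?_, ?_, ?_, ?_, ?_⟩
    · intro u v
      by_cases h : u = y ∧ v = x
      · simp only [hg1, if_pos h]
        exact le_trans (Nat.sub_le _ _) (hcap u v)
      · simp [hg1, h, hcap u v]
    · intro u v _ h
      simp [hg1, h]
    · rw [key x]; rw [if_pos rfl, if_neg hxy]; ring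
    · rw [key y]; rw [if_neg (Ne.symm hxy), if_pos rfl]; ring
    · intro v hvx hvy; rw [key v]; rw [if_neg hvx, if_neg hvy]; ring


lemma getLastD_mem {α} (l : List α) (d : α) (h : l ≠ []) : l.getLastD d ∈ l := by
  cases l with
  | nil => exact absurd rfl h
  | cons a l => rw [List.getLastD_cons]; exact List.getLastD_mem_cons

/-- Augmenting along a simple residual path. -/
lemma aug (f : V → V → ℕ) :
    ∀ (l : List V) (x : V) (g : V → V → ℕ),
      (∀ u v, g u v ≤ b u v) →
      List.Chain (fun a c => f a c < b a c ∨ 0 < f c a) x l →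
      (x :: l).Nodup →
      (∀ a ∈ x :: l, ∀ c ∈ x :: l, g a c = f a c) →
      ∃ g' : V → V → ℕ,
        (∀ u v, g' u v ≤ b u v) ∧
        (∀ u v, u ∉ (x :: l) ∨ v ∉ (x :: l) → g' u v = g u v) ∧
        (∀ v ∈ x :: l, v ≠ x → v ≠ l.getLastD x → exc g' v = exc g v) ∧
        (l ≠ [] → exc g' x = exc g x - 1 ∧
          exc g' (l.getLastD x) = exc g (l.getLastD x) + 1) ∧
        (l = [] → g' = g) := by
  intro l
  induction l with
  | nil =>
    intro x g hcap _ _ _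
    exact ⟨g, hcap, fun _ _ _ => rfl,
      fun v hv hvx _ => absurd (by simpa using hv) hvx,
      fun h => absurd rfl h, fun _ => rfl⟩
  | cons y l' ih =>
    intro x g hcap hchain hnd hag
    obtain ⟨hr, hchain'⟩ := List.chain_cons.mp hchain
    obtain ⟨hx_not, hnd'⟩ := List.nodup_cons.mp hnd
    have hy_not : y ∉ l' := (List.nodup_cons.mp hnd').1
    have hxy : x ≠ y := fun h => hx_not (h ▸ (List.mem_cons_self (a := y) (l := l')))
    obtain ⟨g1, hcap1, hoff1, hexX, hexY, hexO⟩ :=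
      step b f g x y hxy hcap hr
        (hag x (List.mem_cons_self) y (List.mem_cons_of_mem _ (List.mem_cons_self)))
        (hag y (List.mem_cons_of_mem _ (List.mem_cons_self)) x (List.mem_cons_self))
    have hag1 : ∀ a ∈ y :: l', ∀ c ∈ y :: l', g1 a c = f a c := by
      intro a ha c hc
      have hax : a ≠ x := fun h => hx_not (h ▸ ha)
      have hcx : c ≠ x := fun h => hx_not (h ▸ hc)
      rw [hoff1 a c (fun h => hax h.1) (fun h => hcx h.2)]
      exact hag a (List.mem_cons_of_mem _ ha) c (List.mem_cons_of_mem _ hc)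
    obtain ⟨g', hc', hoff', hint', hlast', hnil'⟩ := ih y g1 hcap1 hchain' hnd' hag1
    refine ⟨g', hc', ?_, ?_, ?_, ?_⟩
    · intro u v h
      have h2 : u ∉ (y :: l') ∨ v ∉ (y :: l') := by
        rcases h with h | h
        · exact Or.inl (fun hm => h (List.mem_cons_of_mem _ hm))
        · exact Or.inr (fun hm => h (List.mem_cons_of_mem _ hm))
      rw [hoff' u v h2]
      rcases h with h | h
      · have hux : u ≠ x := fun he => h (he ▸ List.mem_cons_self)
        have huy : u ≠ y := fun he => h (he ▸ List.mem_cons_of_mem _ (List.mem_cons_self))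
        exact hoff1 u v (fun hh => hux hh.1) (fun hh => huy hh.1)
      · have hvx : v ≠ x := fun he => h (he ▸ List.mem_cons_self)
        have hvy : v ≠ y := fun he => h (he ▸ List.mem_cons_of_mem _ (List.mem_cons_self))
        exact hoff1 u v (fun hh => hvy hh.2) (fun hh => hvx hh.2)
    · intro v hv hvx hvz
      rw [List.getLastD_cons] at hvz
      have hv' : v ∈ y :: l' := by
        rcases List.mem_cons.mp hv with h | h
        · exact absurd h hvx
        · exact h
      by_cases hvy : v = y
      · subst hvy
        have hl' : l' ≠ [] := by
          intro h
          rw [h] at hvz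
          exact hvz rfl
        have := (hlast' hl').1
        rw [this, hexY]
        ring
      · have hvl : v ∈ l' := by
          rcases List.mem_cons.mp hv' with h | h
          · exact absurd h hvy
          · exact h
        rw [hint' v hv' hvy hvz]
        exact hexO v hvx hvy
    · intro _
      constructor
      · have : exc g' x = exc g1 x := by
          apply exc_congr
          · intro u
            exact hoff' u x (Or.inr hx_not)
          · intro w
            exact hoff' x w (Or.inl hx_not)
        rw [this, hexX]
      · rw [List.getLastD_cons]
        by_cases hl' : l' = []
        · subst hl'
          rw [hnil' rfl]
          simpa using hexY
        · have hz_mem : l'.getLastD y ∈ l' := getLastD_mem l' y hl'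
          have hzy : l'.getLastD y ≠ y := fun h => hy_not (h ▸ hz_mem)
          have hzx : l'.getLastD y ≠ x := fun h =>
            hx_not (h ▸ List.mem_cons_of_mem _ hz_mem)
          have := (hlast' hl').2
          rw [this, hexO _ hzx hzy]
    · intro h
      exact absurd h (List.cons_ne_nil _ _)


lemma chain_concat {α} (r : α → α → Prop) :
    ∀ (l : List α) (a c : α), List.Chain r a l → r (l.getLastD a) c →
      List.Chain r a (l ++ [c]) := by
  intro l
  induction l with
  | nil => intro a c _ h; exact List.chain_cons.mpr ⟨h, List.Chain.nil⟩
  | cons b l ih =>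
    intro a c hch hr
    obtain ⟨h1, h2⟩ := List.chain_cons.mp hch
    rw [List.getLastD_cons] at hr
    exact List.chain_cons.mpr ⟨h1, ih b c h2 hr⟩

lemma path_of_reach {r : V → V → Prop} {u : V} (h : Relation.ReflTransGen r s u) :
    ∃ l : List V, List.Chain r s l ∧ (s :: l).Nodup ∧ l.getLastD s = u := by
  induction h with
  | refl => exact ⟨[], List.Chain.nil, by simp, rfl⟩
  | @tail b c hab hbc ih =>
    obtain ⟨l, hch, hnd, hlast⟩ := ih
    by_cases hc : c ∈ s :: l
    · obtain ⟨p, q, hpq⟩ := List.append_of_mem hc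
      cases p with
      | nil =>
        have hcs : s = c := ((List.cons.injEq _ _ _ _).mp hpq.symm).1.symm
        exact ⟨[], List.Chain.nil, by simp, hcs⟩
      | cons a p' =>
        have ha : a = s ∧ l = p' ++ c :: q := by
          have := hpq
          simp only [List.cons_append] at this
          exact ⟨((List.cons.injEq _ _ _ _).mp this).1.symm,
            ((List.cons.injEq _ _ _ _).mp this).2⟩
        obtain ⟨has, hl⟩ := ha
        refine ⟨p' ++ [c], ?_, ?_, ?_⟩
        · have := hch
          rw [hl] at this
          exact (List.isChain_cons_split.mp this).1
        · have hsub : (s :: (p' ++ [c])).Sublist (s :: l) := by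
            rw [hl]
            refine List.Sublist.cons₂ s ?_
            exact List.Sublist.append_left ((List.nil_sublist q).cons₂ c) p'
          exact hnd.sublist hsub
        · exact List.getLastD_concat
    · refine ⟨l ++ [c], ?_, ?_, ?_⟩
      · exact chain_concat r l s c hch (hlast ▸ hbc)
      · have : (s :: (l ++ [c])) = (s :: l) ++ [c] := by simp
        rw [this]
        refine (List.nodup_append).mpr ⟨hnd, by simp, ?_⟩
        intro x hx y hy hxy
        rw [List.mem_singleton] at hy
        subst hy; subst hxy
        exact hc hx
      · exact List.getLastD_concat


def IntFlow (f : V → V → ℕ) : Prop :=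
  (∀ u v, f u v ≤ b u v) ∧ ∀ v : V, v ≠ s → v ≠ t → ∑ u, f u v = ∑ w, f v w

def ival (f : V → V → ℕ) : ℕ := ∑ v, f s v

lemma conserved_of_exc {g : V → V → ℕ} {v : V} (h : exc g v = 0) :
    ∑ u, g u v = ∑ w, g v w := by
  have := sub_eq_zero.mp h
  exact_mod_cast this

lemma exc_of_conserved {g : V → V → ℕ} {v : V} (h : ∑ u, g u v = ∑ w, g v w) :
    exc g v = 0 := by
  rw [exc, sub_eq_zero]
  exact_mod_cast h

lemma no_aug (f : V → V → ℕ) (hf : IntFlow b s t f)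
    (hmax : ∀ g, IntFlow b s t g → ival s g ≤ ival s f)
    (z : V)
    (hz : Relation.ReflTransGen
      (fun a c => f a c < b a c ∨ (a ≠ s ∧ 0 < f c a)) s z) (hzs : z ≠ s) :
    z ≠ t ∧ f z s = b z s := by
  obtain ⟨l, hch, hnd, hlast⟩ := path_of_reach s hz
  cases l with
  | nil => exact absurd hlast.symm hzs
  | cons x1 l'' =>
  rw [List.getLastD_cons] at hlast
  obtain ⟨hr1, hch'⟩ := List.chain_cons.mp hch
  obtain ⟨hs_not, hnd'⟩ := List.nodup_cons.mp hnd
  have hsx1 : s ≠ x1 := fun h => hs_not (h ▸ List.mem_cons_self)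
  have hfwd : f s x1 < b s x1 := by
    rcases hr1 with h | h
    · exact h
    · exact absurd rfl h.1
  -- the first push
  set g1 : V → V → ℕ := fun u v => if u = s ∧ v = x1 then f u v + 1 else f u v with hg1
  have hd1 : ∀ u v, (g1 u v : ℤ) = (f u v : ℤ) + if u = s ∧ v = x1 then 1 else 0 := by
    intro u v
    by_cases h : u = s ∧ v = x1 <;> simp [hg1, h]
  have key1 := exc_update f g1 s x1 1 hd1
  have hcap1 : ∀ u v, g1 u v ≤ b u v := by
    intro u v
    by_cases h : u = s ∧ v = x1
    · obtain ⟨hu, hv⟩ := h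
      have : f u v < b u v := by rw [hu, hv]; exact hfwd
      simp only [hg1, if_pos (And.intro hu hv)]
      omega
    · simp [hg1, h, hf.1 u v]
  have hoff1 : ∀ u v, ¬(u = s ∧ v = x1) → g1 u v = f u v := by
    intro u v h
    simp [hg1, h]
  have hval1 : (∑ v, g1 s v) = ival s f + 1 := by
    have : ∀ v, g1 s v = f s v + if v = x1 then 1 else 0 := by
      intro v
      by_cases h : v = x1 <;> simp [hg1, h]
    rw [Finset.sum_congr rfl fun v _ => this v, Finset.sum_add_distrib]
    simp [ival]
  -- augment along the rest of the path
  obtain ⟨g', hc', hoff', hint', hlast', hnil'⟩ :=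
    aug b f l'' x1 g1 hcap1
      (hch'.imp fun a c h => h.elim Or.inl fun hh => Or.inr hh.2)
      hnd'
      (by
        intro a ha c hc
        exact hoff1 a c fun hh => hs_not (hh.1 ▸ ha))
  -- row and column of s are untouched by the augmentation
  have hrow : ∀ v, g' s v = g1 s v := fun v => hoff' s v (Or.inl hs_not)
  have hcol : ∀ u, g' u s = g1 u s := fun u => hoff' u s (Or.inr hs_not)
  have hvalg' : (∑ v, g' s v) = ival s f + 1 := by
    rw [Finset.sum_congr rfl fun v _ => hrow v]
    exact hval1
  have hx1z : l'' ≠ [] → z ≠ x1 := by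
    intro hl h
    have hz_mem : l''.getLastD x1 ∈ l'' := getLastD_mem l'' x1 hl
    rw [hlast] at hz_mem
    exact (List.nodup_cons.mp hnd').1 (h ▸ hz_mem)
  -- excess facts about g'
  have hexg' : ∀ v, v ≠ s → v ≠ z → exc g' v = exc f v := by
    intro v hvs hvz
    by_cases hmem : v ∈ x1 :: l''
    · by_cases hvx1 : v = x1
      · subst hvx1
        have hl : l'' ≠ [] := by
          intro h
          rw [h] at hlast
          exact hvz (by simpa using hlast)
        rw [(hlast' hl).1, key1 v]
        rw [if_neg hvs, if_pos rfl]
        ring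
      · rw [hint' v hmem hvx1 (by rw [hlast]; exact hvz), key1 v,
          if_neg hvx1, if_neg hvs]
        ring
    · have : exc g' v = exc g1 v := by
        apply exc_congr
        · intro u; exact hoff' u v (Or.inr hmem)
        · intro w; exact hoff' v w (Or.inl hmem)
      rw [this, key1 v,
        if_neg (fun h => hmem (by rw [h]; exact List.mem_cons_self)),
        if_neg hvs]
      ring
  have hexz : exc g' z = exc f z + 1 := by
    by_cases hl : l'' = []
    · have hzx1 : z = x1 := by rw [hl] at hlast; exact hlast.symm
      rw [hnil' hl, hzx1, key1 x1, if_pos rfl, if_neg (Ne.symm hsx1)]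
      ring
    · have hzx1 : z ≠ x1 := hx1z hl
      have := (hlast' hl).2
      rw [hlast] at this
      rw [this, key1 z, if_neg hzx1, if_neg hzs]
      ring
  -- first conclusion : z ≠ t
  have hzt : z ≠ t := by
    intro hzt
    have hflow : IntFlow b s t g' := by
      refine ⟨hc', ?_⟩
      intro v hvs hvt
      have hvz : v ≠ z := fun h => hvt (h ▸ hzt)
      apply conserved_of_exc
      rw [hexg' v hvs hvz]
      exact exc_of_conserved (hf.2 v hvs hvt)
    have := hmax g' hflow
    rw [show ival s g' = ∑ v, g' s v from rfl, hvalg'] at this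
    omega
  refine ⟨hzt, ?_⟩
  -- second conclusion : the edge z → s is saturated
  by_contra hne
  have hlt : f z s < b z s := lt_of_le_of_ne (hf.1 z s) hne
  set g2 : V → V → ℕ := fun u v => if u = z ∧ v = s then g' u v + 1 else g' u v with hg2
  have hg'zs : g' z s = f z s := by
    rw [hcol z]
    exact hoff1 z s fun hh => hzs hh.1
  have hd2 : ∀ u v, (g2 u v : ℤ) = (g' u v : ℤ) + if u = z ∧ v = s then 1 else 0 := by
    intro u v
    by_cases h : u = z ∧ v = s <;> simp [hg2, h]
  have key2 := exc_update g' g2 z s 1 hd2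
  have hcap2 : ∀ u v, g2 u v ≤ b u v := by
    intro u v
    by_cases h : u = z ∧ v = s
    · obtain ⟨hu, hv⟩ := h
      have : g' u v < b u v := by rw [hu, hv, hg'zs]; exact hlt
      simp only [hg2, if_pos (And.intro hu hv)]
      omega
    · simp [hg2, h, hc' u v]
  have hval2 : (∑ v, g2 s v) = ival s f + 1 := by
    have : ∀ v, g2 s v = g' s v := by
      intro v
      exact if_neg fun hh => hzs hh.1.symm
    rw [Finset.sum_congr rfl fun v _ => this v]
    exact hvalg'
  have hflow2 : IntFlow b s t g2 := by
    refine ⟨hcap2, ?_⟩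
    intro v hvs hvt
    apply conserved_of_exc
    rw [key2 v, if_neg hvs]
    by_cases hvz : v = z
    · subst hvz
      rw [if_pos rfl, hexz]
      have : exc f v = 0 := exc_of_conserved (hf.2 v hvs hvt)
      rw [this]; ring
    · rw [if_neg hvz, hexg' v hvs hvz]
      have : exc f v = 0 := exc_of_conserved (hf.2 v hvs hvt)
      rw [this]; ring
  have := hmax g2 hflow2
  rw [show ival s g2 = ∑ v, g2 s v from rfl, hval2] at this
  omega


lemma loop_sat (f : V → V → ℕ) (hf : IntFlow b s t f)
    (hmax : ∀ g, IntFlow b s t g → ival s g ≤ ival s f) :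
    f s s = b s s := by
  by_contra hne
  have hlt : f s s < b s s := lt_of_le_of_ne (hf.1 s s) hne
  set g0 : V → V → ℕ := fun u v => if u = s ∧ v = s then f u v + 1 else f u v with hg0
  have hd : ∀ u v, (g0 u v : ℤ) = (f u v : ℤ) + if u = s ∧ v = s then 1 else 0 := by
    intro u v
    by_cases h : u = s ∧ v = s <;> simp [hg0, h]
  have key := exc_update f g0 s s 1 hd
  have hflow : IntFlow b s t g0 := by
    constructor
    · intro u v
      by_cases h : u = s ∧ v = s
      · obtain ⟨hu, hv⟩ := h
        have : f u v < b u v := by rw [hu, hv]; exact hlt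
        simp only [hg0, if_pos (And.intro hu hv)]
        omega
      · simp [hg0, h, hf.1 u v]
    · intro v hvs hvt
      apply conserved_of_exc
      rw [key v, if_neg hvs]
      have : exc f v = 0 := exc_of_conserved (hf.2 v hvs hvt)
      rw [this]; ring
  have hval : (∑ v, g0 s v) = ival s f + 1 := by
    have : ∀ v, g0 s v = f s v + if v = s then 1 else 0 := by
      intro v
      by_cases h : v = s <;> simp [hg0, h]
    rw [Finset.sum_congr rfl fun v _ => this v, Finset.sum_add_distrib]
    simp [ival]
  have := hmax g0 hflow
  rw [show ival s g0 = ∑ v, g0 s v from rfl, hval] at this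
  omega

lemma cut_formula (T : Finset V) (hsT : s ∈ T) (hTt : ∀ v ∈ T, v ≠ s → v ≠ t)
    (g : V → V → ℝ) (hg : FeasibleFlow b s t g) :
    flowValue s g = (∑ u ∈ T, g u s) + (∑ v ∈ T, ∑ w ∈ Tᶜ, g v w)
      - (∑ u ∈ Tᶜ, ∑ v ∈ T.erase s, g u v) := by
  have hcons : ∑ v ∈ T.erase s, (∑ u, g u v) = ∑ v ∈ T.erase s, (∑ w, g v w) := by
    refine Finset.sum_congr rfl fun v hv => ?_
    have hvs : v ≠ s := Finset.ne_of_mem_erase hv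
    exact hg.2.2 v hvs (hTt v (Finset.mem_of_mem_erase hv) hvs)
  have e1 : ∑ v ∈ T, (∑ u, g u v) = (∑ u, g u s) + ∑ v ∈ T.erase s, (∑ u, g u v) :=
    (Finset.add_sum_erase T _ hsT).symm
  have e2 : ∑ v ∈ T, (∑ w, g v w) = (∑ w, g s w) + ∑ v ∈ T.erase s, (∑ w, g v w) :=
    (Finset.add_sum_erase T _ hsT).symm
  have e3 : ∑ v ∈ T, (∑ u, g u v)
      = ∑ v ∈ T, (∑ u ∈ T, g u v) + ∑ v ∈ T, (∑ u ∈ Tᶜ, g u v) := by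
    rw [← Finset.sum_add_distrib]
    exact Finset.sum_congr rfl fun v _ => (Finset.sum_add_sum_compl T _).symm
  have e4 : ∑ v ∈ T, (∑ w, g v w)
      = ∑ v ∈ T, (∑ w ∈ T, g v w) + ∑ v ∈ T, (∑ w ∈ Tᶜ, g v w) := by
    rw [← Finset.sum_add_distrib]
    exact Finset.sum_congr rfl fun v _ => (Finset.sum_add_sum_compl T _).symm
  have e5 : ∑ v ∈ T, ∑ u ∈ T, g u v = ∑ v ∈ T, ∑ w ∈ T, g v w := Finset.sum_comm
  have e6 : ∑ v ∈ T, (∑ u ∈ Tᶜ, g u v) = ∑ u ∈ Tᶜ, (∑ v ∈ T, g u v) := Finset.sum_comm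
  have e7 : ∑ u ∈ Tᶜ, (∑ v ∈ T, g u v)
      = ∑ u ∈ Tᶜ, g u s + ∑ u ∈ Tᶜ, (∑ v ∈ T.erase s, g u v) := by
    rw [← Finset.sum_add_distrib]
    exact Finset.sum_congr rfl fun u _ => (Finset.add_sum_erase T _ hsT).symm
  have e8 : (∑ u, g u s) = ∑ u ∈ T, g u s + ∑ u ∈ Tᶜ, g u s :=
    (Finset.sum_add_sum_compl T _).symm
  have hfv : flowValue s g = ∑ w, g s w := rfl
  rw [hfv]
  linarith [hcons, e1, e2, e3, e4, e5, e6, e7, e8]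

end Stmt6Aux

/-- integrality theorem. In a flow network with integer edge
capacities, single source `s` and single sink `t`, there exists a maximum flow
that is integer-valued on every edge. -/
theorem stmt6 {V : Type} [Fintype V] (b : V → V → ℕ) (s t : V) :
    ∃ f : V → V → ℝ, FeasibleFlow b s t f ∧
      (∀ u v : V, ∃ k : ℕ, f u v = (k : ℝ)) ∧
      ∀ g : V → V → ℝ, FeasibleFlow b s t g → flowValue s g ≤ flowValue s f := by
  classical
  set P : ℕ → Prop := fun n => ∃ f : V → V → ℕ, Stmt6Aux.IntFlow b s t f ∧ Stmt6Aux.ival s f = n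
    with hP
  have hP0 : P 0 := ⟨fun _ _ => 0, ⟨fun _ _ => Nat.zero_le _, fun _ _ _ => rfl⟩,
    by simp [Stmt6Aux.ival]⟩
  set B := ∑ v, b s v with hB
  obtain ⟨f, hf, hfval⟩ := Nat.findGreatest_spec (P := P) (Nat.zero_le B) hP0
  have hmax : ∀ g, Stmt6Aux.IntFlow b s t g → Stmt6Aux.ival s g ≤ Stmt6Aux.ival s f := by
    intro g hg
    have hgB : Stmt6Aux.ival s g ≤ B := Finset.sum_le_sum fun v _ => hg.1 s v
    have h2 := Nat.le_findGreatest (P := P) hgB ⟨g, hg, rfl⟩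
    rw [hfval]
    exact h2
  set resid : V → V → Prop := fun a c => f a c < b a c ∨ (a ≠ s ∧ 0 < f c a) with hresid
  set T : Finset V := Finset.univ.filter (Relation.ReflTransGen resid s) with hT
  have hmemT : ∀ v, v ∈ T ↔ Relation.ReflTransGen resid s v := by
    intro v
    simp [hT]
  have hsT : s ∈ T := (hmemT s).mpr Relation.ReflTransGen.refl
  have hTt : ∀ v ∈ T, v ≠ s → v ≠ t := by
    intro v hv hvs
    exact (Stmt6Aux.no_aug b s t f hf hmax v ((hmemT v).mp hv) hvs).1
  have hsat : ∀ u ∈ T, f u s = b u s := by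
    intro u hu
    by_cases hus : u = s
    · rw [hus]
      exact Stmt6Aux.loop_sat b s t f hf hmax
    · exact (Stmt6Aux.no_aug b s t f hf hmax u ((hmemT u).mp hu) hus).2
  have hcross : ∀ v ∈ T, ∀ w, w ∉ T → f v w = b v w := by
    intro v hv w hw
    refine le_antisymm (hf.1 v w) ?_
    by_contra hlt
    push_neg at hlt
    exact hw ((hmemT w).mpr (Relation.ReflTransGen.tail ((hmemT v).mp hv) (Or.inl hlt)))
  have hback : ∀ u, u ∉ T → ∀ v ∈ T, v ≠ s → f u v = 0 := by
    intro u hu v hv hvs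
    by_contra hne
    have hpos : 0 < f u v := Nat.pos_of_ne_zero hne
    exact hu ((hmemT u).mpr
      (Relation.ReflTransGen.tail ((hmemT v).mp hv) (Or.inr ⟨hvs, hpos⟩)))
  set F : V → V → ℝ := fun u v => ((f u v : ℕ) : ℝ) with hF
  have hFeas : FeasibleFlow b s t F := by
    refine ⟨fun u v => by positivity, fun u v => by simp only [hF]; exact_mod_cast hf.1 u v, ?_⟩
    intro v hvs hvt
    have := hf.2 v hvs hvt
    simp only [hF]
    exact_mod_cast this
  set cap : ℝ := (∑ u ∈ T, (b u s : ℝ)) + ∑ v ∈ T, ∑ w ∈ Tᶜ, (b v w : ℝ) with hcap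
  have hFcap : flowValue s F = cap := by
    rw [Stmt6Aux.cut_formula b s t T hsT hTt F hFeas]
    have t1 : (∑ u ∈ T, F u s) = ∑ u ∈ T, (b u s : ℝ) := by
      refine Finset.sum_congr rfl fun u hu => ?_
      simp [hF, hsat u hu]
    have t2 : (∑ v ∈ T, ∑ w ∈ Tᶜ, F v w) = ∑ v ∈ T, ∑ w ∈ Tᶜ, (b v w : ℝ) := by
      refine Finset.sum_congr rfl fun v hv => Finset.sum_congr rfl fun w hw => ?_
      simp [hF, hcross v hv w (Finset.mem_compl.mp hw)]
    have t3 : (∑ u ∈ Tᶜ, ∑ v ∈ T.erase s, F u v) = 0 := by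
      refine Finset.sum_eq_zero fun u hu => Finset.sum_eq_zero fun v hv => ?_
      simp [hF, hback u (Finset.mem_compl.mp hu) v (Finset.mem_of_mem_erase hv)
        (Finset.ne_of_mem_erase hv)]
    rw [t1, t2, t3, hcap]
    ring
  refine ⟨F, hFeas, fun u v => ⟨f u v, rfl⟩, ?_⟩
  intro g hg
  rw [hFcap, Stmt6Aux.cut_formula b s t T hsT hTt g hg]
  have b1 : (∑ u ∈ T, g u s) ≤ ∑ u ∈ T, (b u s : ℝ) :=
    Finset.sum_le_sum fun u _ => hg.2.1 u s
  have b2 : (∑ v ∈ T, ∑ w ∈ Tᶜ, g v w) ≤ ∑ v ∈ T, ∑ w ∈ Tᶜ, (b v w : ℝ) :=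
    Finset.sum_le_sum fun v _ => Finset.sum_le_sum fun w _ => hg.2.1 v w
  have b3 : (0 : ℝ) ≤ ∑ u ∈ Tᶜ, ∑ v ∈ T.erase s, g u v :=
    Finset.sum_nonneg fun u _ => Finset.sum_nonneg fun v _ => hg.1 u v
  rw [hcap]
  linarith
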